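/- Let m₁₁ > 0, m₂₁ ≥ 0, m₂₂ < 0, η > 0, and let M be the 2×2 lower-triangular matrix with entries M₁₁ = m₁₁, M₁₂ = 0, M₂₁ = m₂₁, M₂₂ = m₂₂. Then any differentiable solution y : [0,∞) → ℝ² of dy/dt = M y(t) − η (|y₁(t)| + |y₂(t)|) y(t) with y(0) ∈ (0,∞) × [0,∞) converges as t → ∞ to the vector z̄ given by z̄₁ = (m₁₁/η) · 1/(1 + m₂₁/(m₁₁ − m₂₂)) and z̄₂ = (m₂₁/(m₁₁ − m₂₂)) z̄₁. -/

import Mathlib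

open MeasureTheory Set Filter Topology
noncomputable section

private lemma constOn_Ici {f : ℝ → ℝ}
    (hf : ∀ t ∈ Ici (0:ℝ), HasDerivWithinAt f 0 (Ici 0) t) {t : ℝ} (ht : 0 ≤ t) :
    f t = f 0 := by
  have hcont : ContinuousOn f (Icc 0 t) :=
    fun s hs => ((hf s hs.1).continuousWithinAt).mono Icc_subset_Ici_self
  have hderiv : ∀ s ∈ Ico (0:ℝ) t, HasDerivWithinAt f 0 (Ici s) s :=
    fun s hs => (hf s hs.1).mono (Ici_subset_Ici.mpr hs.1)
  exact constant_of_has_deriv_right_zero hcont hderiv t (right_mem_Icc.mpr ht)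

private lemma ftc_Ici {n : ℝ → ℝ} (hn : ContinuousOn n (Ici 0)) {t : ℝ} (ht : 0 ≤ t) :
    HasDerivWithinAt (fun u => ∫ s in (0:ℝ)..u, n s) (n t) (Ici 0) t := by
  have hint : IntervalIntegrable n MeasureTheory.volume 0 t :=
    (hn.mono (by rw [uIcc_of_le ht]; exact Icc_subset_Ici_self)).intervalIntegrable
  have hmeas : StronglyMeasurableAtFilter n (𝓝[Ici 0] t) :=
    hn.stronglyMeasurableAtFilter_nhdsWithin measurableSet_Ici t
  rcases eq_or_lt_of_le ht with h | h
  · have hmeas' : StronglyMeasurableAtFilter n (𝓝[Ioi (0:ℝ)] 0) :=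
      ⟨Ici 0, nhdsWithin_mono _ Ioi_subset_Ici_self self_mem_nhdsWithin,
        hn.aestronglyMeasurable measurableSet_Ici⟩
    rw [← h]
    rw [← h] at hint
    exact intervalIntegral.integral_hasDerivWithinAt_right hint hmeas'
      ((hn 0 self_mem_Ici).mono Ioi_subset_Ici_self)
  · have hnh : 𝓝[Ici (0:ℝ)] t = 𝓝 t := nhdsWithin_eq_nhds.2 (Ici_mem_nhds h)
    rw [hnh] at hmeas
    exact (intervalIntegral.integral_hasDerivAt_right hint hmeas
      (hn.continuousAt (Ici_mem_nhds h))).hasDerivWithinAt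

/-- Convergence of solutions of the autonomous logistic matrix ODE
`dy/dt = M y − η ‖y‖₁ y`, where `M` is lower triangular with `m₁₁ > 0`, `m₂₁ ≥ 0`,
`m₂₂ < 0`.  Any solution started in `(0,∞) × [0,∞)` converges to
`z̄₁ = (m₁₁/η)/(1 + m₂₁/(m₁₁ − m₂₂))`, `z̄₂ = (m₂₁/(m₁₁ − m₂₂)) z̄₁`. -/
theorem ode_convergence_autonomous
    (m11 m21 m22 η : ℝ) (hm11 : 0 < m11) (hm21 : 0 ≤ m21) (hm22 : m22 < 0) (hη : 0 < η)
    (y1 y2 : ℝ → ℝ)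
    (hy1 : ∀ t ∈ Ici (0:ℝ), HasDerivWithinAt y1
      (m11 * y1 t - η * (|y1 t| + |y2 t|) * y1 t) (Ici 0) t)
    (hy2 : ∀ t ∈ Ici (0:ℝ), HasDerivWithinAt y2
      (m21 * y1 t + m22 * y2 t - η * (|y1 t| + |y2 t|) * y2 t) (Ici 0) t)
    (h0 : 0 < y1 0) (h0' : 0 ≤ y2 0) :
    Tendsto y1 atTop (nhds ((m11 / η) * (1 / (1 + m21 / (m11 - m22))))) ∧
    Tendsto y2 atTop
      (nhds ((m21 / (m11 - m22)) * ((m11 / η) * (1 / (1 + m21 / (m11 - m22)))))) := by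
  have hlam : 0 < m11 - m22 := by linarith
  set lam : ℝ := m11 - m22 with hlam_def
  set k : ℝ := m21 / lam with hk_def
  have hk : 0 ≤ k := div_nonneg hm21 hlam.le
  -- exp derivative helper
  have hexp : ∀ (c t : ℝ), HasDerivAt (fun u : ℝ => Real.exp (c*u)) (Real.exp (c*t)*c) t := by
    intro c t
    simpa using ((hasDerivAt_id t).const_mul c).exp
  have hmulexp : ∀ a b t : ℝ, Real.exp (a*t) * Real.exp (b*t) = Real.exp ((a+b)*t) := by
    intro a b t; rw [← Real.exp_add]; ring_nf
  -- continuity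
  have hcy1 : ContinuousOn y1 (Ici 0) := fun t ht => (hy1 t ht).continuousWithinAt
  have hcy2 : ContinuousOn y2 (Ici 0) := fun t ht => (hy2 t ht).continuousWithinAt
  have hcn : ContinuousOn (fun t => |y1 t| + |y2 t|) (Ici 0) := hcy1.abs.add hcy2.abs
  -- the integrating factor
  set w : ℝ → ℝ := fun t => Real.exp (η * ∫ s in (0:ℝ)..t, (|y1 s| + |y2 s|)) with hw_def
  have hwpos : ∀ t, 0 < w t := fun t => Real.exp_pos _
  have hw0 : w 0 = 1 := by simp [hw_def]
  have hw : ∀ t ∈ Ici (0:ℝ), HasDerivWithinAt w (η * (|y1 t| + |y2 t|) * w t) (Ici 0) t := by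
    intro t ht
    have h1 := ((ftc_Ici hcn ht).const_mul η).exp
    convert h1 using 1
    ring
  set z1 : ℝ → ℝ := fun t => y1 t * w t with hz1_def
  set z2 : ℝ → ℝ := fun t => y2 t * w t with hz2_def
  have hy1w : ∀ t, y1 t = z1 t / w t := by
    intro t; rw [hz1_def]; field_simp
    exact (mul_div_cancel_right₀ (y1 t) (hwpos t).ne').symm
  have hy2w : ∀ t, y2 t = z2 t / w t := by
    intro t; rw [hz2_def]; field_simp
    exact (mul_div_cancel_right₀ (y2 t) (hwpos t).ne').symm
  -- the linear ODE for z
  have hdz1 : ∀ t ∈ Ici (0:ℝ), HasDerivWithinAt z1 (m11 * z1 t) (Ici 0) t := by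
    intro t ht
    have h1 := (hy1 t ht).mul (hw t ht)
    rw [hz1_def]
    refine h1.congr_deriv (Eq.symm ?_)
    ring
  have hdz2 : ∀ t ∈ Ici (0:ℝ), HasDerivWithinAt z2 (m21 * z1 t + m22 * z2 t) (Ici 0) t := by
    intro t ht
    have h1 := (hy2 t ht).mul (hw t ht)
    rw [hz2_def]
    refine h1.congr_deriv (Eq.symm ?_)
    simp only [hz1_def, hz2_def]
    ring
  -- explicit formula for z1
  have hE1 : ∀ t ∈ Ici (0:ℝ), z1 t = y1 0 * Real.exp (m11 * t) := by
    have hg : ∀ t ∈ Ici (0:ℝ),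
        HasDerivWithinAt (fun u => z1 u * Real.exp (-m11 * u)) 0 (Ici 0) t := by
      intro t ht
      have h1 := (hdz1 t ht).mul (hexp (-m11) t).hasDerivWithinAt
      refine h1.congr_deriv (Eq.symm ?_)
      ring
    intro t ht
    have h2 := constOn_Ici hg ht
    simp only [mul_zero, Real.exp_zero, mul_one] at h2
    have hz10 : z1 0 = y1 0 := by rw [hz1_def]; simp [hw0]
    rw [hz10] at h2
    calc z1 t = z1 t * Real.exp (-m11 * t) * Real.exp (m11 * t) := by
          rw [mul_assoc, hmulexp]; simp
      _ = y1 0 * Real.exp (m11 * t) := by rw [h2]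
  -- explicit formula for z2
  have hE2 : ∀ t ∈ Ici (0:ℝ),
      z2 t = k * y1 0 * Real.exp (m11 * t) + (y2 0 - k * y1 0) * Real.exp (m22 * t) := by
    have hp : ∀ t ∈ Ici (0:ℝ),
        HasDerivWithinAt (fun u => lam * (z2 u * Real.exp (-m22 * u))
          - m21 * y1 0 * Real.exp (lam * u)) 0 (Ici 0) t := by
      intro t ht
      have h1 := (((hdz2 t ht).mul (hexp (-m22) t).hasDerivWithinAt).const_mul lam).sub
        ((hexp lam t).hasDerivWithinAt.const_mul (m21 * y1 0))
      refine h1.congr_deriv (Eq.symm ?_)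
      rw [hE1 t ht]
      have hex : Real.exp (m11 * t) * Real.exp (-m22 * t) = Real.exp (lam * t) := by
        rw [hmulexp]; congr 1 <;> (try (rw [hlam_def]; ring))
      linear_combination (-(lam * m21 * y1 0)) * hex
    intro t ht
    have h2 := constOn_Ici hp ht
    simp only [mul_zero, Real.exp_zero, mul_one] at h2
    have hz20 : z2 0 = y2 0 := by rw [hz2_def]; simp [hw0]
    rw [hz20] at h2
    have hex1 : Real.exp (lam * t) * Real.exp (m22 * t) = Real.exp (m11 * t) := by
      rw [hmulexp]; congr 1 <;> (try (rw [hlam_def]; ring))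
    have hex2 : Real.exp (-m22 * t) * Real.exp (m22 * t) = 1 := by
      rw [hmulexp]; simp
    have key : lam * z2 t
        = m21 * y1 0 * Real.exp (m11 * t) + (lam * y2 0 - m21 * y1 0) * Real.exp (m22 * t) := by
      have h3 := congrArg (fun x => x * Real.exp (m22 * t)) h2
      linear_combination h3 - (lam * z2 t) * hex2 + (m21 * y1 0) * hex1
    have hlam0 : lam ≠ 0 := hlam.ne'
    have hklam : k * lam = m21 := div_mul_cancel₀ _ hlam0
    refine mul_left_cancel₀ hlam0 ?_
    linear_combination key - (y1 0 * (Real.exp (m11 * t) - Real.exp (m22 * t))) * hklam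
  -- positivity
  have hz1pos : ∀ t ∈ Ici (0:ℝ), 0 < z1 t := by
    intro t ht; rw [hE1 t ht]; positivity
  have hz2nn : ∀ t ∈ Ici (0:ℝ), 0 ≤ z2 t := by
    intro t ht
    rw [hE2 t ht]
    have h1 : Real.exp (m22 * t) ≤ Real.exp (m11 * t) := by
      apply Real.exp_le_exp.2
      have : (0:ℝ) ≤ t := ht
      nlinarith
    nlinarith [mul_nonneg (mul_nonneg hk h0.le) (sub_nonneg.2 h1),
      mul_nonneg h0' (Real.exp_pos (m22 * t)).le]
  have hy1pos : ∀ t ∈ Ici (0:ℝ), 0 < y1 t := by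
    intro t ht; rw [hy1w t]; exact div_pos (hz1pos t ht) (hwpos t)
  have hy2nn : ∀ t ∈ Ici (0:ℝ), 0 ≤ y2 t := by
    intro t ht; rw [hy2w t]; exact div_nonneg (hz2nn t ht) (hwpos t).le
  -- rewrite the derivative of w
  have hw2 : ∀ t ∈ Ici (0:ℝ), HasDerivWithinAt w (η * (z1 t + z2 t)) (Ici 0) t := by
    intro t ht
    have h1 := hw t ht
    have h2 : η * (|y1 t| + |y2 t|) * w t = η * (z1 t + z2 t) := by
      rw [abs_of_pos (hy1pos t ht), abs_of_nonneg (hy2nn t ht)]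
      simp only [hz1_def, hz2_def]; ring
    rwa [h2] at h1
  -- explicit formula for w
  set alpha : ℝ := (1 + k) * y1 0 with halpha_def
  set beta : ℝ := y2 0 - k * y1 0 with hbeta_def
  set C : ℝ := m11 * m22 - m22 * η * alpha - m11 * η * beta with hC_def
  have hE3 : ∀ t ∈ Ici (0:ℝ), m11 * m22 * w t
      = m22 * η * alpha * Real.exp (m11 * t) + m11 * η * beta * Real.exp (m22 * t) + C := by
    have hq : ∀ t ∈ Ici (0:ℝ),
        HasDerivWithinAt (fun u => m11 * m22 * w u - m22 * η * alpha * Real.exp (m11 * u)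
          - m11 * η * beta * Real.exp (m22 * u)) 0 (Ici 0) t := by
      intro t ht
      have h1 := (((hw2 t ht).const_mul (m11 * m22)).sub
        ((hexp m11 t).hasDerivWithinAt.const_mul (m22 * η * alpha))).sub
        ((hexp m22 t).hasDerivWithinAt.const_mul (m11 * η * beta))
      refine h1.congr_deriv (Eq.symm ?_)
      rw [hE1 t ht, hE2 t ht, halpha_def, hbeta_def]
      ring
    intro t ht
    have h2 := constOn_Ici hq ht
    simp only [mul_zero, Real.exp_zero, mul_one] at h2
    rw [hw0] at h2
    rw [hC_def]
    linarith [h2]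
  -- limits
  have hm220 : m22 ≠ 0 := hm22.ne
  have hdecay : ∀ c : ℝ, c < 0 → Tendsto (fun t => Real.exp (c * t)) atTop (𝓝 0) := by
    intro c hc
    have h1 : Tendsto (fun t : ℝ => c * t) atTop atBot := by
      have h2 : Tendsto (fun t : ℝ => (-c) * t) atTop atTop :=
        Tendsto.const_mul_atTop (by linarith) tendsto_id
      have h3 : Tendsto (fun t : ℝ => -((-c) * t)) atTop atBot :=
        tendsto_neg_atTop_atBot.comp h2
      simpa using h3
    exact Real.tendsto_exp_atBot.comp h1
  have h1k : (0:ℝ) < 1 + k := by linarith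
  have halpha_pos : 0 < alpha := by rw [halpha_def]; exact mul_pos h1k h0
  set D : ℝ := η * alpha / m11 with hD_def
  have hDpos : 0 < D := by rw [hD_def]; positivity
  have hDne : D ≠ 0 := hDpos.ne'
  have hmm0 : m11 * m22 ≠ 0 := (mul_neg_of_pos_of_neg hm11 hm22).ne
  have hv : Tendsto (fun t => Real.exp (-m11 * t) * w t) atTop (𝓝 D) := by
    have hg : Tendsto (fun t => (m22 * η * alpha
        + m11 * η * beta * Real.exp ((m22 - m11) * t)
        + C * Real.exp (-m11 * t)) / (m11 * m22)) atTop
        (𝓝 ((m22 * η * alpha + m11 * η * beta * 0 + C * 0) / (m11 * m22))) := by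
      apply Tendsto.div_const
      exact (tendsto_const_nhds.add ((hdecay _ (by linarith)).const_mul _)).add
        ((hdecay _ (by linarith)).const_mul _)
    have hval : (m22 * η * alpha + m11 * η * beta * 0 + C * 0) / (m11 * m22) = D := by
      rw [hD_def]
      field_simp
      ring
    rw [hval] at hg
    refine Tendsto.congr' (eventuallyEq_of_mem (Ici_mem_atTop 0) (fun t ht => ?_)) hg
    have h3 := hE3 t ht
    have e1 : Real.exp (m11 * t) * Real.exp (-m11 * t) = 1 := by rw [hmulexp]; simp
    have e2 : Real.exp (m22 * t) * Real.exp (-m11 * t) = Real.exp ((m22 - m11) * t) := by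
      rw [hmulexp]; congr 1 <;> (try ring)
    rw [eq_comm, eq_div_iff hmm0]
    linear_combination Real.exp (-m11 * t) * h3 + (m22 * η * alpha) * e1
      + (m11 * η * beta) * e2
  constructor
  · have h1 : Tendsto (fun t => y1 0 / (Real.exp (-m11 * t) * w t)) atTop (𝓝 (y1 0 / D)) :=
      tendsto_const_nhds.div hv hDne
    have hval : y1 0 / D = m11 / η * (1 / (1 + k)) := by
      rw [hD_def, halpha_def]
      field_simp
    rw [hval] at h1
    refine Tendsto.congr' (eventuallyEq_of_mem (Ici_mem_atTop 0) (fun t ht => ?_)) h1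
    have e1 : Real.exp (m11 * t) * Real.exp (-m11 * t) = 1 := by rw [hmulexp]; simp
    rw [hy1w t, hE1 t ht]
    rw [div_eq_div_iff (by positivity) (hwpos t).ne']
    linear_combination (-(y1 0 * w t)) * e1
  · have hneg : m22 - m11 < 0 := by linarith
    have h1 : Tendsto (fun t => (k * y1 0 + beta * Real.exp ((m22 - m11) * t))
        / (Real.exp (-m11 * t) * w t)) atTop (𝓝 ((k * y1 0 + beta * 0) / D)) :=
      (tendsto_const_nhds.add ((hdecay _ hneg).const_mul _)).div hv hDne
    have hval : (k * y1 0 + beta * 0) / D = k * (m11 / η * (1 / (1 + k))) := by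
      rw [hD_def, halpha_def]
      field_simp
      ring
    rw [hval] at h1
    refine Tendsto.congr' (eventuallyEq_of_mem (Ici_mem_atTop 0) (fun t ht => ?_)) h1
    have e1 : Real.exp (m11 * t) * Real.exp (-m11 * t) = 1 := by rw [hmulexp]; simp
    have e2 : Real.exp (m22 * t) * Real.exp (-m11 * t) = Real.exp ((m22 - m11) * t) := by
      rw [hmulexp]; congr 1 <;> (try ring)
    rw [hy2w t, hE2 t ht]
    rw [div_eq_div_iff (by positivity) (hwpos t).ne']
    linear_combination (-(k * y1 0 * w t)) * e1 + (-(beta * w t)) * e2
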